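/- Let N, M ≥ 1, let Q ∈ ℝ^{N×M} be row-stochastic with strictly positive entries, let a ∈ ℝ^N with a_n ≥ 0 for all n, and let b ∈ ℝ satisfy min_n a_n < b. Define g(λ) = sup_{p ∈ Δ_N} [ I(p,Q) + λ(b − Σ_{n=1}^N a_n p_n) ] for λ ∈ ℝ. Then g is strictly increasing to the right of Λ₀ := log N / (b − min_n a_n): for all Λ', t with Λ₀ < Λ' < t, one has g(t) > g(Λ'). Consequently, inf_{λ ≥ 0} g(λ) = inf_{0 ≤ λ ≤ Λ'} g(λ) for every Λ' > Λ₀. -/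

import Mathlib

open Real

/-- Average mutual information `I(p,Q)`. -/
noncomputable def AMI {N M : ℕ} (p : Fin N → ℝ) (Q : Fin N → Fin M → ℝ) : ℝ :=
  ∑ n, ∑ m, p n * Q n m * Real.log (Q n m / ∑ l, p l * Q l m)

/-- `Q` is row-stochastic with strictly positive entries. -/
def rowStochPos {N M : ℕ} (Q : Fin N → Fin M → ℝ) : Prop :=
  (∀ n m, 0 < Q n m) ∧ ∀ n, ∑ m, Q n m = 1

/-- The Lagrangian dual function `g(λ)` of the average-cost constrained capacity problem. -/
noncomputable def gfun {N M : ℕ} (Q : Fin N → Fin M → ℝ) (a : Fin N → ℝ) (b : ℝ)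
    (lam : ℝ) : ℝ :=
  sSup { x | ∃ p ∈ stdSimplex ℝ (Fin N), x = AMI p Q + lam * (b - ∑ n, a n * p n) }

lemma entropy_le {N : ℕ} (hN : 0 < N) (p : Fin N → ℝ) (h0 : ∀ n, 0 ≤ p n) (h1 : ∑ n, p n = 1) :
    ∑ n, -(p n * Real.log (p n)) ≤ Real.log N := by
  have hNR : (0:ℝ) < N := Nat.cast_pos.mpr hN
  have key : ∀ n, -(p n * Real.log (p n)) ≤ p n * Real.log N + (1/N - p n) := by
    intro n
    rcases eq_or_lt_of_le (h0 n) with h | h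
    · simp only [← h, zero_mul, neg_zero, sub_zero, zero_add]; positivity
    · have hx : (0:ℝ) < 1 / (p n * N) := by positivity
      have := Real.log_le_sub_one_of_pos hx
      have hlog : Real.log (1 / (p n * N)) = -(Real.log (p n) + Real.log N) := by
        rw [Real.log_div one_ne_zero (by positivity), Real.log_one,
          Real.log_mul (ne_of_gt h) (ne_of_gt hNR)]
        ring
      rw [hlog] at this
      have := mul_le_mul_of_nonneg_left this (le_of_lt h)
      calc -(p n * Real.log (p n)) = p n * -(Real.log (p n) + Real.log N) + p n * Real.log N := by ring
        _ ≤ p n * (1 / (p n * N) - 1) + p n * Real.log N := by linarith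
        _ = p n * Real.log N + (1/N - p n) := by field_simp; ring
  calc ∑ n, -(p n * Real.log (p n)) ≤ ∑ n, (p n * Real.log N + (1/N - p n)) :=
        Finset.sum_le_sum fun n _ => key n
    _ = Real.log N := by
        rw [Finset.sum_add_distrib, ← Finset.sum_mul, h1, Finset.sum_sub_distrib, h1]
        simp [Finset.card_univ]
        field_simp
        norm_num

lemma AMI_le_log {N M : ℕ} (hN : 0 < N) (Q : Fin N → Fin M → ℝ) (hQ : rowStochPos Q)
    (p : Fin N → ℝ) (hp : p ∈ stdSimplex ℝ (Fin N)) : AMI p Q ≤ Real.log N := by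
  obtain ⟨hp0, hp1⟩ := hp
  have hq : ∀ m, 0 < ∑ l, p l * Q l m := by
    intro m
    obtain ⟨l₀, -, hl₀⟩ : ∃ l ∈ Finset.univ, 0 < p l := by
      by_contra h
      push_neg at h
      have : ∑ n, p n = 0 :=
        Finset.sum_eq_zero fun n _ => le_antisymm (h n (Finset.mem_univ n)) (hp0 n)
      rw [hp1] at this; norm_num at this
    exact Finset.sum_pos' (fun l _ => mul_nonneg (hp0 l) (hQ.1 l m).le)
      ⟨l₀, Finset.mem_univ l₀, mul_pos hl₀ (hQ.1 l₀ m)⟩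
  have key : ∀ n, ∑ m, p n * Q n m * Real.log (Q n m / ∑ l, p l * Q l m)
      ≤ -(p n * Real.log (p n)) := by
    intro n
    rcases eq_or_lt_of_le (hp0 n) with h | h
    · simp only [← h, zero_mul, neg_zero]
      exact le_of_eq (Finset.sum_eq_zero fun m _ => rfl)
    · have term : ∀ m, p n * Q n m * Real.log (Q n m / ∑ l, p l * Q l m)
          ≤ p n * Q n m * (-(Real.log (p n))) := by
        intro m
        refine mul_le_mul_of_nonneg_left ?_ (mul_nonneg h.le (hQ.1 n m).le)
        rw [← Real.log_inv]
        refine Real.log_le_log (div_pos (hQ.1 n m) (hq m)) ?_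
        rw [div_le_iff₀ (hq m)]
        have : p n * Q n m ≤ ∑ l, p l * Q l m :=
          Finset.single_le_sum (fun l _ => mul_nonneg (hp0 l) (hQ.1 l m).le) (Finset.mem_univ n)
        calc Q n m = (p n)⁻¹ * (p n * Q n m) := by field_simp
          _ ≤ (p n)⁻¹ * ∑ l, p l * Q l m := mul_le_mul_of_nonneg_left this (by positivity)
      calc ∑ m, p n * Q n m * Real.log (Q n m / ∑ l, p l * Q l m)
          ≤ ∑ m, p n * Q n m * (-(Real.log (p n))) := Finset.sum_le_sum fun m _ => term m
        _ = -(p n * Real.log (p n)) := by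
            rw [← Finset.sum_mul, ← Finset.mul_sum, hQ.2 n]; ring
  calc AMI p Q ≤ ∑ n, -(p n * Real.log (p n)) := Finset.sum_le_sum fun n _ => key n
    _ ≤ Real.log N := entropy_le hN p hp0 hp1

theorem dual_function_increasing_beyond_threshold
    {N M : ℕ} (hN : 0 < N) (hM : 0 < M)
    (Q : Fin N → Fin M → ℝ) (hQ : rowStochPos Q)
    (a : Fin N → ℝ) (ha : ∀ n, 0 ≤ a n) (b : ℝ)
    (hb : Finset.univ.inf' (Finset.univ_nonempty_iff.mpr (Fin.pos_iff_nonempty.mp hN)) a < b)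
    (Λ₀ : ℝ)
    (hΛ₀ : Λ₀ = Real.log N /
      (b - Finset.univ.inf' (Finset.univ_nonempty_iff.mpr (Fin.pos_iff_nonempty.mp hN)) a)) :
    (∀ Λ' t : ℝ, Λ₀ < Λ' → Λ' < t → gfun Q a b Λ' < gfun Q a b t) ∧
    ∀ Λ' : ℝ, Λ₀ < Λ' →
      sInf (gfun Q a b '' { lam | 0 ≤ lam }) = sInf (gfun Q a b '' Set.Icc 0 Λ') := by
  have hne : (Finset.univ : Finset (Fin N)).Nonempty :=
    Finset.univ_nonempty_iff.mpr (Fin.pos_iff_nonempty.mp hN)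
  set amin := Finset.univ.inf' hne a with hamin
  set c := b - amin with hc_def
  have hc : 0 < c := sub_pos.mpr hb
  have hlogN : 0 ≤ Real.log N := Real.log_nonneg (by exact_mod_cast hN)
  have hΛ₀nn : 0 ≤ Λ₀ := hΛ₀ ▸ div_nonneg hlogN hc.le
  -- the element n₀ attaining the minimum
  obtain ⟨n₀, -, hn₀⟩ := Finset.exists_mem_eq_inf' hne a
  -- the point mass δ at n₀
  set δ : Fin N → ℝ := fun n => if n = n₀ then 1 else 0 with hδ_def
  have hδsimp : δ ∈ stdSimplex ℝ (Fin N) := by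
    constructor
    · intro n; simp only [hδ_def]; split_ifs <;> norm_num
    · simp [hδ_def]
  have hδsum : ∑ n, a n * δ n = amin := by
    simp only [hδ_def, mul_ite, mul_one, mul_zero, Finset.sum_ite_eq', Finset.mem_univ, if_true]
    exact hn₀.symm
  have hδAMI : AMI δ Q = 0 := by
    unfold AMI
    refine Finset.sum_eq_zero fun n _ => Finset.sum_eq_zero fun m _ => ?_
    have hql : ∑ l, δ l * Q l m = Q n₀ m := by simp [hδ_def, ite_mul]
    rw [hql]
    by_cases hn : n = n₀
    · subst hn
      rw [div_self (ne_of_gt (hQ.1 n m)), Real.log_one, mul_zero]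
    · simp [hδ_def, hn]
  -- the sets
  have hmem : ∀ lam : ℝ, lam * c ∈
      { x | ∃ p ∈ stdSimplex ℝ (Fin N), x = AMI p Q + lam * (b - ∑ n, a n * p n) } := by
    intro lam
    exact ⟨δ, hδsimp, by rw [hδAMI, hδsum, zero_add]⟩
  have hslope : ∀ p ∈ stdSimplex ℝ (Fin N), b - ∑ n, a n * p n ≤ c := by
    intro p hp
    have : amin * 1 ≤ ∑ n, a n * p n := by
      rw [← hp.2, Finset.mul_sum]
      exact Finset.sum_le_sum fun n _ =>
        mul_le_mul_of_nonneg_right (Finset.inf'_le a (Finset.mem_univ n)) (hp.1 n)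
    rw [mul_one] at this
    simp only [hc_def]
    linarith
  have hbdd : ∀ lam : ℝ, 0 ≤ lam → BddAbove
      { x | ∃ p ∈ stdSimplex ℝ (Fin N), x = AMI p Q + lam * (b - ∑ n, a n * p n) } := by
    intro lam hlam
    refine ⟨Real.log N + lam * c, fun x hx => ?_⟩
    obtain ⟨p, hp, rfl⟩ := hx
    have h1 := AMI_le_log hN Q hQ p hp
    have h2 := mul_le_mul_of_nonneg_left (hslope p hp) hlam
    linarith
  have hg_ge : ∀ lam : ℝ, 0 ≤ lam → lam * c ≤ gfun Q a b lam := by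
    intro lam hlam
    exact le_csSup (hbdd lam hlam) (hmem lam)
  -- Part 1
  have part1 : ∀ Λ' t : ℝ, Λ₀ < Λ' → Λ' < t → gfun Q a b Λ' < gfun Q a b t := by
    intro Λ' t hΛ' ht
    have hΛ'pos : 0 < Λ' := lt_of_le_of_lt hΛ₀nn hΛ'
    have htpos : 0 < t := hΛ'pos.trans ht
    have hΛ'c : Real.log N < Λ' * c := by
      have : Real.log N / c < Λ' := hΛ₀ ▸ hΛ'
      calc Real.log N = Real.log N / c * c := by field_simp
        _ < Λ' * c := by exact mul_lt_mul_of_pos_right this hc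
    set θ := (Λ' * c - Real.log N) / (2 * Λ') with hθ_def
    have hθpos : 0 < θ := div_pos (by linarith) (by linarith)
    have hθc : θ ≤ c := by
      rw [hθ_def, div_le_iff₀ (by linarith : (0:ℝ) < 2 * Λ')]
      nlinarith
    have hΛ'θ : Λ' * θ = (Λ' * c - Real.log N) / 2 := by
      rw [hθ_def]; field_simp
    have htc : t * c ≤ gfun Q a b t := hg_ge t htpos.le
    have hupper : gfun Q a b Λ' ≤ gfun Q a b t - (t - Λ') * θ := by
      refine csSup_le ⟨_, hmem Λ'⟩ fun x hx => ?_
      obtain ⟨p, hp, rfl⟩ := hx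
      set s := b - ∑ n, a n * p n with hs_def
      have hAMI := AMI_le_log hN Q hQ p hp
      rcases le_or_gt θ s with hs | hs
      · have hft : AMI p Q + t * s ≤ gfun Q a b t :=
          le_csSup (hbdd t htpos.le) ⟨p, hp, rfl⟩
        have h2 : (t - Λ') * θ ≤ (t - Λ') * s :=
          mul_le_mul_of_nonneg_left hs (by linarith)
        linarith
      · have h1 : Λ' * s ≤ Λ' * θ := mul_le_mul_of_nonneg_left hs.le hΛ'pos.le
        have h2 : (t - Λ') * θ ≤ (t - Λ') * c :=
          mul_le_mul_of_nonneg_left hθc (by linarith)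
        have h3 : (t - Λ') * c = t * c - Λ' * c := by ring
        nlinarith [hAMI, h1, h2, h3, htc, hΛ'θ, hΛ'c]
    have : 0 < (t - Λ') * θ := mul_pos (by linarith) hθpos
    linarith
  refine ⟨part1, fun Λ' hΛ' => ?_⟩
  -- Part 2
  have hΛ'pos : 0 < Λ' := lt_of_le_of_lt hΛ₀nn hΛ'
  have hsub : gfun Q a b '' Set.Icc 0 Λ' ⊆ gfun Q a b '' { lam | 0 ≤ lam } :=
    Set.image_mono fun x hx => hx.1
  have hBne : (gfun Q a b '' Set.Icc 0 Λ').Nonempty :=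
    ⟨gfun Q a b Λ', Set.mem_image_of_mem _ ⟨hΛ'pos.le, le_refl Λ'⟩⟩
  have hAne : (gfun Q a b '' { lam | 0 ≤ lam }).Nonempty := hBne.mono hsub
  have hAbdd : BddBelow (gfun Q a b '' { lam | 0 ≤ lam }) := by
    refine ⟨0, fun x hx => ?_⟩
    obtain ⟨lam, hlam, rfl⟩ := hx
    exact le_trans (mul_nonneg hlam hc.le) (hg_ge lam hlam)
  have hBbdd : BddBelow (gfun Q a b '' Set.Icc 0 Λ') := hAbdd.mono hsub
  refine le_antisymm (csInf_le_csInf hAbdd hBne hsub) ?_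
  refine le_csInf hAne fun x hx => ?_
  obtain ⟨lam, hlam, rfl⟩ := hx
  rcases le_or_gt lam Λ' with h | h
  · exact csInf_le hBbdd (Set.mem_image_of_mem _ ⟨hlam, h⟩)
  · have h1 : gfun Q a b Λ' < gfun Q a b lam := part1 Λ' lam hΛ' h
    have h2 : sInf (gfun Q a b '' Set.Icc 0 Λ') ≤ gfun Q a b Λ' :=
      csInf_le hBbdd (Set.mem_image_of_mem _ ⟨hΛ'pos.le, le_refl Λ'⟩)
    linarith
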